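/- arXiv:2504.18850 — 2 statements merged into one kernel-verified Lean document; each statement's English description precedes it below -/
import Mathlib

section
/- Let b ∈ L^∞(Ω). Then for every f ∈ H, x ∈ G, y ∈ Y: (V_b f)(x,y) = ∫_{G×Y} f(u,v)·φ_b(x−u, y, v) dν(u) dλ(v). That is, every translation-invariant operator V_b = R* M_b R is an integral operator with convolution-type kernel φ_b. -/
open MeasureTheory Complex

private theorem scalar_polar' (a c : ℂ) :
    (starRingEnd ℂ) a * c
      = (4⁻¹ : ℂ) * ((starRingEnd ℂ) (a + c) * (a + c) - (starRingEnd ℂ) (a - c) * (a - c))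
        + (Complex.I * 4⁻¹) *
          ((starRingEnd ℂ) (a - Complex.I * c) * (a - Complex.I * c)
            - (starRingEnd ℂ) (a + Complex.I * c) * (a + Complex.I * c)) := by
  simp only [map_add, map_sub, map_mul, Complex.conj_I]
  linear_combination (((starRingEnd ℂ) a * c - (starRingEnd ℂ) c * a) / 2) * Complex.I_sq

private theorem normsq' (z : ℂ) : (starRingEnd ℂ) z * z = ((‖z‖^2 : ℝ) : ℂ) := by
  rw [mul_comm, Complex.mul_conj]
  norm_cast
  rw [← Complex.sq_norm]

set_option maxHeartbeats 2000000 in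
/-- every translation-invariant operator `V_b = R* M_b R` is an integral
operator with convolution-type kernel: `(V_b f)(x,y) = ∫_{G×Y} f(u,v) φ_b(x−u,y,v)`,
where `φ_b(x,y,v) = ∫_Ω ξ(x) q_ξ(y) conj(q_ξ(v)) b(ξ) dν̂(ξ)`.
(The group `G` is written multiplicatively.) -/
theorem Vb_integral_representation
    {G : Type*} [CommGroup G] [MeasurableSpace G] (ν : Measure G)
    {Y : Type*} [MeasurableSpace Y] (lam : Measure Y)
    {H : Type*} [NormedAddCommGroup H] [InnerProductSpace ℂ H]
    (ev : H →ₗ[ℂ] (G × Y → ℂ)) (K : G → Y → H)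
    (hrepr : ∀ (f : H) (p : G × Y), ev f p = (inner ℂ (K p.1 p.2) f : ℂ))
    (hinner : ∀ f g : H,
      (inner ℂ f g : ℂ) = ∫ p, (starRingEnd ℂ) (ev f p) * ev g p ∂(ν.prod lam))
    (hinv : ∀ x y u v, ev (K x y) (u, v) = ev (K 1 y) (u * x⁻¹, v))
    {Ω : Type*} [MeasurableSpace Ω] (m : Measure Ω)
    (χ : Ω → G → ℂ) (q : Ω → Y → ℂ)
    (hχmul : ∀ ξ x u, χ ξ (x * u) = χ ξ x * χ ξ u)
    (hχnorm : ∀ ξ x, ‖χ ξ x‖ = 1)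
    (R : H →ₗ[ℂ] (Ω → ℂ))
    (hRiso : ∀ f : H, ∫ ξ, ‖R f ξ‖ ^ 2 ∂m = ‖f‖ ^ 2)
    (hRK : ∀ x y, (fun ξ => R (K x y) ξ)
      =ᵐ[m] (fun ξ => (starRingEnd ℂ) (χ ξ x * q ξ y)))
    -- Fourier inversion: `R*` recovers a function from its transform
    (hRinv : ∀ f : H, Integrable (fun ξ => R f ξ) m → ∀ p : G × Y,
      ev f p = ∫ ξ, χ ξ p.1 * q ξ p.2 * R f ξ ∂m)
    (b : Ω → ℂ) (Cb : ℝ) (hb : ∀ ξ, ‖b ξ‖ ≤ Cb)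
    -- `V_b = R* M_b R`
    (Vb : H →L[ℂ] H)
    (hVb : ∀ f : H, (fun ξ => R (Vb f) ξ) =ᵐ[m] fun ξ => b ξ * R f ξ)
    (f : H) (x : G) (y : Y) :
    ev (Vb f) (x, y)
      = ∫ p, ev f p *
          (∫ ξ, χ ξ (x * p.1⁻¹) * q ξ y * (starRingEnd ℂ) (q ξ p.2) * b ξ ∂m)
        ∂(ν.prod lam) := by
  classical
  -- integrability of the diagonal pairings for `ev`
  have evInt : ∀ u : H,
      Integrable (fun p => (starRingEnd ℂ) (ev u p) * ev u p) (ν.prod lam) := by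
    intro u
    rcases eq_or_ne u 0 with rfl | hu
    · simpa [map_zero] using (integrable_zero (G × Y) ℂ (ν.prod lam))
    · by_contra hni
      have h0 := hinner u u
      rw [integral_undef hni] at h0
      exact hu (inner_self_eq_zero.mp h0)
  -- integrability of all pairings for `ev` (polarization)
  have evPair : ∀ u v : H,
      Integrable (fun p => (starRingEnd ℂ) (ev u p) * ev v p) (ν.prod lam) := by
    intro u v
    have hfe : (fun p => (starRingEnd ℂ) (ev u p) * ev v p)
        = fun p => (4⁻¹ : ℂ) * ((starRingEnd ℂ) (ev (u + v) p) * ev (u + v) p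
              - (starRingEnd ℂ) (ev (u - v) p) * ev (u - v) p)
          + (Complex.I * 4⁻¹) *
            ((starRingEnd ℂ) (ev (u - Complex.I • v) p) * ev (u - Complex.I • v) p
              - (starRingEnd ℂ) (ev (u + Complex.I • v) p) * ev (u + Complex.I • v) p) := by
      funext p
      simp only [map_add, map_sub, _root_.map_smul, Pi.add_apply, Pi.sub_apply, Pi.smul_apply,
        smul_eq_mul, map_mul, Complex.conj_I]
      linear_combination (((starRingEnd ℂ) (ev u p) * ev v p
        - (starRingEnd ℂ) (ev v p) * ev u p) / 2) * Complex.I_sq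
    rw [hfe]
    exact (((evInt _).sub (evInt _)).const_mul _).add
      (((evInt _).sub (evInt _)).const_mul _)
  -- integrability of `‖R u‖²`
  have RnormInt : ∀ u : H, Integrable (fun ξ => ‖R u ξ‖ ^ 2) m := by
    intro u
    rcases eq_or_ne u 0 with rfl | hu
    · simpa [map_zero] using (integrable_zero Ω ℝ m)
    · by_contra hni
      have h0 := hRiso u
      rw [integral_undef hni] at h0
      have hnu : ‖u‖ = 0 := by nlinarith [norm_nonneg u]
      exact hu (norm_eq_zero.mp hnu)
  -- `R` pairings: integrable and compute the inner product
  have RPair : ∀ u v : H,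
      Integrable (fun ξ => (starRingEnd ℂ) (R u ξ) * R v ξ) m ∧
        ∫ ξ, (starRingEnd ℂ) (R u ξ) * R v ξ ∂m = (inner ℂ u v : ℂ) := by
    intro u v
    have hfe : (fun ξ => (starRingEnd ℂ) (R u ξ) * R v ξ)
        = fun ξ => (4⁻¹ : ℂ) * (((‖R (u + v) ξ‖ ^ 2 : ℝ) : ℂ) - ((‖R (u - v) ξ‖ ^ 2 : ℝ) : ℂ))
          + (Complex.I * 4⁻¹) *
            (((‖R (u - Complex.I • v) ξ‖ ^ 2 : ℝ) : ℂ)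
              - ((‖R (u + Complex.I • v) ξ‖ ^ 2 : ℝ) : ℂ)) := by
      funext ξ
      rw [← normsq', ← normsq', ← normsq', ← normsq']
      simp only [map_add, map_sub, _root_.map_smul, Pi.add_apply, Pi.sub_apply, Pi.smul_apply,
        smul_eq_mul, map_mul, Complex.conj_I]
      linear_combination (((starRingEnd ℂ) (R u ξ) * R v ξ
        - (starRingEnd ℂ) (R v ξ) * R u ξ) / 2) * Complex.I_sq
    have I1 : Integrable (fun ξ => ((‖R (u + v) ξ‖ ^ 2 : ℝ) : ℂ)) m := (RnormInt _).ofReal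
    have I2 : Integrable (fun ξ => ((‖R (u - v) ξ‖ ^ 2 : ℝ) : ℂ)) m := (RnormInt _).ofReal
    have I3 : Integrable (fun ξ => ((‖R (u - Complex.I • v) ξ‖ ^ 2 : ℝ) : ℂ)) m :=
      (RnormInt _).ofReal
    have I4 : Integrable (fun ξ => ((‖R (u + Complex.I • v) ξ‖ ^ 2 : ℝ) : ℂ)) m :=
      (RnormInt _).ofReal
    have I12 : Integrable (fun ξ => ((‖R (u + v) ξ‖ ^ 2 : ℝ) : ℂ)
        - ((‖R (u - v) ξ‖ ^ 2 : ℝ) : ℂ)) m := I1.sub I2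
    have I34 : Integrable (fun ξ => ((‖R (u - Complex.I • v) ξ‖ ^ 2 : ℝ) : ℂ)
        - ((‖R (u + Complex.I • v) ξ‖ ^ 2 : ℝ) : ℂ)) m := I3.sub I4
    have J1 : Integrable (fun ξ => (4⁻¹ : ℂ) * (((‖R (u + v) ξ‖ ^ 2 : ℝ) : ℂ)
        - ((‖R (u - v) ξ‖ ^ 2 : ℝ) : ℂ))) m := I12.const_mul _
    have J2 : Integrable (fun ξ => (Complex.I * 4⁻¹) *
        (((‖R (u - Complex.I • v) ξ‖ ^ 2 : ℝ) : ℂ)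
          - ((‖R (u + Complex.I • v) ξ‖ ^ 2 : ℝ) : ℂ))) m := I34.const_mul _
    constructor
    · rw [hfe]
      exact J1.add J2
    · rw [hfe, integral_add J1 J2, integral_const_mul, integral_const_mul,
        integral_sub I1 I2, integral_sub I3 I4,
        show (∫ ξ, ((‖R (u + v) ξ‖ ^ 2 : ℝ) : ℂ) ∂m) = ((∫ ξ, ‖R (u + v) ξ‖ ^ 2 ∂m : ℝ) : ℂ)
          from integral_ofReal,
        show (∫ ξ, ((‖R (u - v) ξ‖ ^ 2 : ℝ) : ℂ) ∂m) = ((∫ ξ, ‖R (u - v) ξ‖ ^ 2 ∂m : ℝ) : ℂ)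
          from integral_ofReal,
        show (∫ ξ, ((‖R (u - Complex.I • v) ξ‖ ^ 2 : ℝ) : ℂ) ∂m)
            = ((∫ ξ, ‖R (u - Complex.I • v) ξ‖ ^ 2 ∂m : ℝ) : ℂ) from integral_ofReal,
        show (∫ ξ, ((‖R (u + Complex.I • v) ξ‖ ^ 2 : ℝ) : ℂ) ∂m)
            = ((∫ ξ, ‖R (u + Complex.I • v) ξ‖ ^ 2 ∂m : ℝ) : ℂ) from integral_ofReal,
        hRiso, hRiso, hRiso, hRiso,
        show (inner ℂ u v : ℂ) = ((‖u + v‖ : ℂ) ^ 2 - (‖u - v‖ : ℂ) ^ 2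
            + ((‖u - Complex.I • v‖ : ℂ) ^ 2 - (‖u + Complex.I • v‖ : ℂ) ^ 2) * Complex.I) / 4
          from inner_eq_sum_norm_sq_div_four u v]
      push_cast
      ring
  -- character facts
  have hχone : ∀ ξ, χ ξ 1 = 1 := by
    intro ξ
    have h := hχmul ξ 1 1
    rw [one_mul] at h
    have hne : χ ξ 1 ≠ 0 := by
      intro h0
      have h1 := hχnorm ξ 1
      rw [h0] at h1
      simp at h1
    exact mul_left_cancel₀ hne (show χ ξ 1 * χ ξ 1 = χ ξ 1 * 1 by rw [mul_one, ← h])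
  have hχinv : ∀ ξ (g : G), χ ξ g⁻¹ = (starRingEnd ℂ) (χ ξ g) := by
    intro ξ g
    have hne : χ ξ g ≠ 0 := by
      intro h0
      have h1 := hχnorm ξ g
      rw [h0] at h1
      simp at h1
    have hmul : χ ξ g * χ ξ g⁻¹ = 1 := by
      rw [← hχmul]
      simp [hχone]
    have hconj : χ ξ g * (starRingEnd ℂ) (χ ξ g) = 1 := by
      rw [mul_comm, normsq', hχnorm]
      norm_num
    exact mul_left_cancel₀ hne (hmul.trans hconj.symm)
  -- identification of the convolution kernel
  have hker : ∀ (u : G) (v : Y),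
      (∫ ξ, χ ξ (x * u⁻¹) * q ξ y * (starRingEnd ℂ) (q ξ v) * b ξ ∂m)
        = (inner ℂ (K x y) (Vb (K u v)) : ℂ) := by
    intro u v
    have h1 : (fun ξ => χ ξ (x * u⁻¹) * q ξ y * (starRingEnd ℂ) (q ξ v) * b ξ)
        =ᵐ[m] fun ξ => (starRingEnd ℂ) (R (K x y) ξ) * R (Vb (K u v)) ξ := by
      filter_upwards [hRK x y, hRK u v, hVb (K u v)] with ξ hxy huv hvb
      rw [hvb, huv, hxy, hχmul ξ x u⁻¹, hχinv ξ u]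
      simp only [map_mul, Complex.conj_conj]
      ring
    rw [integral_congr_ae h1, (RPair (K x y) (Vb (K u v))).2]
  -- rewrite both sides
  rw [show ev (Vb f) (x, y) = (inner ℂ (K x y) (Vb f) : ℂ) from hrepr (Vb f) (x, y)]
  simp only [hker]
  -- square-integrability of `ev`
  have hev_sq : ∀ u : H,
      Integrable (fun p => ‖ev u p‖ ^ 2) (ν.prod lam) ∧
        ∫ p, ‖ev u p‖ ^ 2 ∂(ν.prod lam) = ‖u‖ ^ 2 := by
    intro u
    have h1 : (fun p : G × Y => (starRingEnd ℂ) (ev u p) * ev u p)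
        = fun p => ((‖ev u p‖ ^ 2 : ℝ) : ℂ) := funext fun p => normsq' _
    have h2 := evInt u
    rw [h1] at h2
    have h3 : Integrable (fun p => ‖ev u p‖ ^ 2) (ν.prod lam) := by
      have h4 := h2.re
      simpa only [RCLike.re_to_complex, Complex.ofReal_re] using h4
    refine ⟨h3, ?_⟩
    have h4 := hinner u u
    rw [h1, show (∫ p, ((‖ev u p‖ ^ 2 : ℝ) : ℂ) ∂(ν.prod lam))
        = ((∫ p, ‖ev u p‖ ^ 2 ∂(ν.prod lam) : ℝ) : ℂ) from integral_ofReal,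
      show (inner ℂ u u : ℂ) = (((‖u‖ : ℝ) : ℂ)) ^ 2 from inner_self_eq_norm_sq_to_K u] at h4
    have h5 : ((‖u‖ ^ 2 : ℝ) : ℂ) = ((∫ p, ‖ev u p‖ ^ 2 ∂(ν.prod lam) : ℝ) : ℂ) := by
      push_cast
      rw [← h4]
    exact_mod_cast h5.symm
  -- pass to the completion of `H`
  have hdense : DenseRange (UniformSpace.Completion.toComplL : H →L[ℂ] UniformSpace.Completion H) :=
    UniformSpace.Completion.denseRange_coe
  have hui : IsUniformInducing
      (UniformSpace.Completion.toComplL : H →L[ℂ] UniformSpace.Completion H) :=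
    UniformSpace.Completion.isUniformInducing_coe H
  set ι : H →L[ℂ] UniformSpace.Completion H := UniformSpace.Completion.toComplL with hιdef
  set ℓ : UniformSpace.Completion H →L[ℂ] ℂ :=
    ContinuousLinearMap.extend ((innerSL ℂ (K x y)).comp Vb) ι with hℓdef
  have hℓ : ∀ g : H, ℓ (ι g) = (inner ℂ (K x y) (Vb g) : ℂ) := by
    intro g
    have h1 := ContinuousLinearMap.extend_eq (f := (innerSL ℂ (K x y)).comp Vb) (e := ι) hdense hui g
    rw [hℓdef]
    exact h1.trans (by simp)
  set h : UniformSpace.Completion H := (InnerProductSpace.toDual ℂ _).symm ℓ with hhdef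
  have hh : ∀ w : UniformSpace.Completion H, (inner ℂ h w : ℂ) = ℓ w := fun w =>
    InnerProductSpace.toDual_symm_apply
  have hKV : ∀ g : H, (inner ℂ (K x y) (Vb g) : ℂ) = (inner ℂ h (ι g) : ℂ) := by
    intro g
    rw [hh, hℓ]
  rw [hKV f]
  simp only [hKV]
  -- choose an approximating sequence for `h`
  have hseq : ∀ n : ℕ, ∃ g : H, ‖h - ι g‖ < 1 / (n + 1) := by
    intro n
    obtain ⟨g, hg⟩ := hdense.exists_dist_lt h (by positivity : (0:ℝ) < 1 / (n + 1))
    exact ⟨g, by rw [← dist_eq_norm]; exact hg⟩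
  choose s hs using hseq
  have hι_inner : ∀ g g' : H, (inner ℂ (ι g) (ι g') : ℂ) = (inner ℂ g g' : ℂ) := fun g g' =>
    UniformSpace.Completion.inner_coe g g'
  have hι_norm : ∀ g : H, ‖ι g‖ = ‖g‖ := fun g => UniformSpace.Completion.norm_coe g
  have hstend : Filter.Tendsto (fun n : ℕ => ι (s n)) Filter.atTop (nhds h) := by
    rw [tendsto_iff_dist_tendsto_zero]
    refine squeeze_zero (fun n => dist_nonneg) (fun n => ?_)
      tendsto_one_div_add_atTop_nhds_zero_nat
    rw [dist_comm, dist_eq_norm]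
    exact (hs n).le
  -- the approximating integrands
  have hFn_int : ∀ n, Integrable (fun p => ev f p * (starRingEnd ℂ) (ev (s n) p)) (ν.prod lam) := by
    intro n
    have h1 := evPair (s n) f
    have h2 : (fun p : G × Y => ev f p * (starRingEnd ℂ) (ev (s n) p))
        = fun p => (starRingEnd ℂ) (ev (s n) p) * ev f p := funext fun p => mul_comm _ _
    rw [h2]
    exact h1
  have hFn_val : ∀ n, ∫ p, ev f p * (starRingEnd ℂ) (ev (s n) p) ∂(ν.prod lam)
      = (inner ℂ (ι (s n)) (ι f) : ℂ) := by
    intro n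
    have h2 : (fun p : G × Y => ev f p * (starRingEnd ℂ) (ev (s n) p))
        = fun p => (starRingEnd ℂ) (ev (s n) p) * ev f p := funext fun p => mul_comm _ _
    rw [h2, hι_inner]
    exact (hinner (s n) f).symm
  have hconj_ev : ∀ n (p : G × Y),
      (starRingEnd ℂ) (ev (s n) p) = (inner ℂ (ι (s n)) (ι (K p.1 p.2)) : ℂ) := by
    intro n p
    rw [hι_inner, hrepr (s n) p, inner_conj_symm]
  have hptF : ∀ p : G × Y,
      Filter.Tendsto (fun n => ev f p * (starRingEnd ℂ) (ev (s n) p)) Filter.atTop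
        (nhds (ev f p * (inner ℂ h (ι (K p.1 p.2)) : ℂ))) := by
    intro p
    simp only [hconj_ev]
    exact tendsto_const_nhds.mul (hstend.inner tendsto_const_nhds)
  -- quantitative L¹ bounds
  have hskey : ∀ n mI : ℕ, n ≤ mI →
      (∫⁻ p, ENNReal.ofReal ‖(ev f p * (starRingEnd ℂ) (ev (s mI) p))
          - (ev f p * (starRingEnd ℂ) (ev (s n) p))‖ ∂(ν.prod lam))
        ≤ ENNReal.ofReal ((1 / (n + 1)) * (‖f‖ ^ 2 + 1)) := by
    intro n mI hnm
    set t : ℝ := 2 / (n + 1) with ht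
    have htpos : (0:ℝ) < t := by positivity
    have hpt : ∀ p : G × Y,
        ‖(ev f p * (starRingEnd ℂ) (ev (s mI) p)) - (ev f p * (starRingEnd ℂ) (ev (s n) p))‖
          ≤ t / 2 * ‖ev f p‖ ^ 2 + 1 / (2 * t) * ‖ev (s mI - s n) p‖ ^ 2 := by
      intro p
      have e1 : (ev f p * (starRingEnd ℂ) (ev (s mI) p))
          - (ev f p * (starRingEnd ℂ) (ev (s n) p))
          = ev f p * (starRingEnd ℂ) (ev (s mI - s n) p) := by
        simp only [map_sub, Pi.sub_apply]
        ring
      rw [e1, norm_mul, RCLike.norm_conj]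
      have h0 : t / 2 * ‖ev f p‖ ^ 2 + 1 / (2 * t) * ‖ev (s mI - s n) p‖ ^ 2
          - ‖ev f p‖ * ‖ev (s mI - s n) p‖
          = (t * ‖ev f p‖ - ‖ev (s mI - s n) p‖) ^ 2 / (2 * t) := by
        field_simp
        ring
      have h1 : (0:ℝ) ≤ (t * ‖ev f p‖ - ‖ev (s mI - s n) p‖) ^ 2 / (2 * t) :=
        div_nonneg (sq_nonneg _) (by positivity)
      linarith
    have hInt1 : Integrable (fun p => t / 2 * ‖ev f p‖ ^ 2
        + 1 / (2 * t) * ‖ev (s mI - s n) p‖ ^ 2) (ν.prod lam) :=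
      ((hev_sq f).1.const_mul _).add ((hev_sq (s mI - s n)).1.const_mul _)
    have hsb : ‖s mI - s n‖ ≤ t := by
      have e2 : ‖s mI - s n‖ = ‖ι (s mI) - ι (s n)‖ := by
        rw [← hι_norm (s mI - s n), map_sub]
      have h3 : ‖ι (s mI) - ι (s n)‖ ≤ ‖h - ι (s mI)‖ + ‖h - ι (s n)‖ := by
        have e3 : ι (s mI) - ι (s n) = (h - ι (s n)) - (h - ι (s mI)) := by abel
        rw [e3]
        exact (norm_sub_le _ _).trans (by rw [add_comm])
      have hm1 : ‖h - ι (s mI)‖ < 1 / (mI + 1) := hs mI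
      have hn1 : ‖h - ι (s n)‖ < 1 / (n + 1) := hs n
      have h4 : (1:ℝ) / (mI + 1) ≤ 1 / (n + 1) := by
        apply one_div_le_one_div_of_le
        · positivity
        · have := (Nat.cast_le (α := ℝ)).mpr hnm
          linarith
      rw [e2, ht]
      have h5 : (2:ℝ) / (n + 1) = 1 / (n + 1) + 1 / (n + 1) := by ring
      rw [h5]
      linarith
    calc (∫⁻ p, ENNReal.ofReal ‖(ev f p * (starRingEnd ℂ) (ev (s mI) p))
          - (ev f p * (starRingEnd ℂ) (ev (s n) p))‖ ∂(ν.prod lam))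
        ≤ ∫⁻ p, ENNReal.ofReal (t / 2 * ‖ev f p‖ ^ 2
            + 1 / (2 * t) * ‖ev (s mI - s n) p‖ ^ 2) ∂(ν.prod lam) :=
          lintegral_mono fun p => ENNReal.ofReal_le_ofReal (hpt p)
      _ = ENNReal.ofReal (∫ p, (t / 2 * ‖ev f p‖ ^ 2
            + 1 / (2 * t) * ‖ev (s mI - s n) p‖ ^ 2) ∂(ν.prod lam)) :=
          (ofReal_integral_eq_lintegral_ofReal hInt1
            (Filter.Eventually.of_forall fun p => by positivity)).symm
      _ ≤ ENNReal.ofReal ((1 / (n + 1)) * (‖f‖ ^ 2 + 1)) := by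
          apply ENNReal.ofReal_le_ofReal
          rw [integral_add ((hev_sq f).1.const_mul _) ((hev_sq (s mI - s n)).1.const_mul _),
            integral_const_mul, integral_const_mul, (hev_sq f).2, (hev_sq (s mI - s n)).2]
          have h6 : 1 / (2 * t) * ‖s mI - s n‖ ^ 2 ≤ t / 2 := by
            rw [show (1:ℝ) / (2 * t) * ‖s mI - s n‖ ^ 2 = ‖s mI - s n‖ ^ 2 / (2 * t) by ring,
              div_le_iff₀ (by positivity)]
            nlinarith [norm_nonneg (s mI - s n)]
          have h7 : t / 2 = 1 / (n + 1) := by rw [ht]; ring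
          nlinarith [sq_nonneg ‖f‖]
  -- Fatou: compare the limit integrand with the approximations
  have hkey : ∀ n : ℕ,
      (∫⁻ p, ENNReal.ofReal ‖(ev f p * (inner ℂ h (ι (K p.1 p.2)) : ℂ))
          - (ev f p * (starRingEnd ℂ) (ev (s n) p))‖ ∂(ν.prod lam))
        ≤ ENNReal.ofReal ((1 / (n + 1)) * (‖f‖ ^ 2 + 1)) := by
    intro n
    have hptlim : ∀ p : G × Y,
        Filter.Tendsto (fun mI => ENNReal.ofReal
            ‖(ev f p * (starRingEnd ℂ) (ev (s mI) p))
              - (ev f p * (starRingEnd ℂ) (ev (s n) p))‖) Filter.atTop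
          (nhds (ENNReal.ofReal ‖(ev f p * (inner ℂ h (ι (K p.1 p.2)) : ℂ))
              - (ev f p * (starRingEnd ℂ) (ev (s n) p))‖)) := by
      intro p
      exact (ENNReal.continuous_ofReal.tendsto _).comp
        (((hptF p).sub tendsto_const_nhds).norm)
    have hFatou : (∫⁻ p, ENNReal.ofReal ‖(ev f p * (inner ℂ h (ι (K p.1 p.2)) : ℂ))
          - (ev f p * (starRingEnd ℂ) (ev (s n) p))‖ ∂(ν.prod lam))
        ≤ Filter.liminf (fun mI => ∫⁻ p, ENNReal.ofReal
            ‖(ev f p * (starRingEnd ℂ) (ev (s mI) p))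
              - (ev f p * (starRingEnd ℂ) (ev (s n) p))‖ ∂(ν.prod lam)) Filter.atTop := by
      have e4 : (fun p : G × Y => ENNReal.ofReal ‖(ev f p * (inner ℂ h (ι (K p.1 p.2)) : ℂ))
            - (ev f p * (starRingEnd ℂ) (ev (s n) p))‖)
          = fun p => Filter.liminf (fun mI => ENNReal.ofReal
              ‖(ev f p * (starRingEnd ℂ) (ev (s mI) p))
                - (ev f p * (starRingEnd ℂ) (ev (s n) p))‖) Filter.atTop :=
        funext fun p => ((hptlim p).liminf_eq).symm
      rw [e4]
      refine lintegral_liminf_le' fun mI => ?_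
      exact (((hFn_int mI).sub (hFn_int n)).aestronglyMeasurable.norm.aemeasurable).ennreal_ofReal
    refine hFatou.trans ?_
    refine Filter.liminf_le_of_frequently_le' ?_
    exact (Filter.eventually_atTop.mpr ⟨n, fun mI hm => hskey n mI hm⟩).frequently
  -- integrability of the limit integrand
  have hFmeas : AEStronglyMeasurable
      (fun p : G × Y => ev f p * (inner ℂ h (ι (K p.1 p.2)) : ℂ)) (ν.prod lam) :=
    aestronglyMeasurable_of_tendsto_ae Filter.atTop
      (fun n => (hFn_int n).aestronglyMeasurable)
      (Filter.Eventually.of_forall hptF)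
  have hFint : Integrable (fun p : G × Y => ev f p * (inner ℂ h (ι (K p.1 p.2)) : ℂ)) (ν.prod lam) := by
    refine ⟨hFmeas, ?_⟩
    rw [hasFiniteIntegral_iff_norm]
    have h1 : ∀ p : G × Y, ENNReal.ofReal ‖ev f p * (inner ℂ h (ι (K p.1 p.2)) : ℂ)‖
        ≤ ENNReal.ofReal ‖(ev f p * (inner ℂ h (ι (K p.1 p.2)) : ℂ))
            - (ev f p * (starRingEnd ℂ) (ev (s 0) p))‖
          + ENNReal.ofReal ‖ev f p * (starRingEnd ℂ) (ev (s 0) p)‖ := by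
      intro p
      rw [← ENNReal.ofReal_add (norm_nonneg _) (norm_nonneg _)]
      apply ENNReal.ofReal_le_ofReal
      conv_lhs => rw [show ev f p * (inner ℂ h (ι (K p.1 p.2)) : ℂ)
        = (ev f p * (inner ℂ h (ι (K p.1 p.2)) : ℂ) - ev f p * (starRingEnd ℂ) (ev (s 0) p))
          + ev f p * (starRingEnd ℂ) (ev (s 0) p) by ring]
      exact norm_add_le _ _
    calc (∫⁻ p, ENNReal.ofReal ‖ev f p * (inner ℂ h (ι (K p.1 p.2)) : ℂ)‖ ∂(ν.prod lam))
        ≤ ∫⁻ p, (ENNReal.ofReal ‖(ev f p * (inner ℂ h (ι (K p.1 p.2)) : ℂ))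
              - (ev f p * (starRingEnd ℂ) (ev (s 0) p))‖
            + ENNReal.ofReal ‖ev f p * (starRingEnd ℂ) (ev (s 0) p)‖) ∂(ν.prod lam) :=
          lintegral_mono h1
      _ = (∫⁻ p, ENNReal.ofReal ‖(ev f p * (inner ℂ h (ι (K p.1 p.2)) : ℂ))
              - (ev f p * (starRingEnd ℂ) (ev (s 0) p))‖ ∂(ν.prod lam))
          + ∫⁻ p, ENNReal.ofReal ‖ev f p * (starRingEnd ℂ) (ev (s 0) p)‖ ∂(ν.prod lam) :=
          lintegral_add_left'
            ((((hFmeas.sub (hFn_int 0).aestronglyMeasurable)).norm.aemeasurable).ennreal_ofReal) _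
      _ < ⊤ := by
          have h2 := hkey 0
          have h3 := (hFn_int 0).2
          rw [hasFiniteIntegral_iff_norm] at h3
          exact ENNReal.add_lt_top.mpr ⟨lt_of_le_of_lt h2 ENNReal.ofReal_lt_top, h3⟩
  -- convergence of the integrals
  have hlim1 : Filter.Tendsto (fun n => ∫ p, ev f p * (starRingEnd ℂ) (ev (s n) p) ∂(ν.prod lam))
      Filter.atTop (nhds (∫ p, ev f p * (inner ℂ h (ι (K p.1 p.2)) : ℂ) ∂(ν.prod lam))) := by
    rw [tendsto_iff_norm_sub_tendsto_zero]
    have hb2 : Filter.Tendsto (fun n : ℕ => (1 / ((n:ℝ) + 1)) * (‖f‖ ^ 2 + 1)) Filter.atTop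
        (nhds 0) := by
      have := tendsto_one_div_add_atTop_nhds_zero_nat.mul_const (‖f‖ ^ 2 + 1)
      rw [zero_mul] at this
      exact this
    refine squeeze_zero (fun n => norm_nonneg _) (fun n => ?_) hb2
    calc ‖(∫ p, ev f p * (starRingEnd ℂ) (ev (s n) p) ∂(ν.prod lam))
          - ∫ p, ev f p * (inner ℂ h (ι (K p.1 p.2)) : ℂ) ∂(ν.prod lam)‖
        = ‖∫ p, ((ev f p * (starRingEnd ℂ) (ev (s n) p))
            - ev f p * (inner ℂ h (ι (K p.1 p.2)) : ℂ)) ∂(ν.prod lam)‖ := by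
          rw [integral_sub (hFn_int n) hFint]
      _ ≤ (∫⁻ p, ENNReal.ofReal ‖(ev f p * (starRingEnd ℂ) (ev (s n) p))
            - ev f p * (inner ℂ h (ι (K p.1 p.2)) : ℂ)‖ ∂(ν.prod lam)).toReal :=
          norm_integral_le_lintegral_norm _
      _ ≤ ((1 / (n + 1)) * (‖f‖ ^ 2 + 1)) := by
          have h2 : (∫⁻ p, ENNReal.ofReal ‖(ev f p * (starRingEnd ℂ) (ev (s n) p))
              - ev f p * (inner ℂ h (ι (K p.1 p.2)) : ℂ)‖ ∂(ν.prod lam))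
              ≤ ENNReal.ofReal ((1 / (n + 1)) * (‖f‖ ^ 2 + 1)) := by
            have h4 : ∀ p : G × Y, ‖(ev f p * (starRingEnd ℂ) (ev (s n) p))
                - ev f p * (inner ℂ h (ι (K p.1 p.2)) : ℂ)‖
                = ‖(ev f p * (inner ℂ h (ι (K p.1 p.2)) : ℂ))
                  - (ev f p * (starRingEnd ℂ) (ev (s n) p))‖ := fun p => norm_sub_rev _ _
            simp only [h4]
            exact hkey n
          have h5 := ENNReal.toReal_mono ENNReal.ofReal_ne_top h2
          rw [ENNReal.toReal_ofReal (by positivity)] at h5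
          exact h5
  have hlim2 : Filter.Tendsto (fun n => ∫ p, ev f p * (starRingEnd ℂ) (ev (s n) p) ∂(ν.prod lam))
      Filter.atTop (nhds (inner ℂ h (ι f) : ℂ)) := by
    simp only [hFn_val]
    exact hstend.inner tendsto_const_nhds
  exact (tendsto_nhds_unique hlim2 hlim1)
end

section
/- In the vertical-operator setting on the Bergman space of the upper half-plane (Ω = ℝ₊, L_{ξ,v}(y) = 4πξe^{−2π(y+v)ξ}), the function ψ(x,y,v) := 4π ∫₀^∞ ξ² e^{2πi(x+iy)ξ} e^{−2πvξ} dξ = −i/(π²(x+iy+iv)³) satisfies both membership conditions of A₀ (ψ(·,·,v) ∈ L²_hol(Π) and conj(ψ(−·,y,·)) ∈ L²_hol(Π)), but there is no b ∈ L^∞(ℝ₊) with ψ = φ_b; hence ψ ∈ A₀ \ A, i.e., A₀ strictly contains A. -/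
open MeasureTheory Complex Real

/-- The function `ψ(x,y,v) = −i/(π²(x+iy+iv)³)` from Remark on `A₀ ≠ A`
(vertical operators on the Bergman space of the upper half-plane). -/
noncomputable def psiA0 (x y v : ℝ) : ℂ :=
  -Complex.I / ((π : ℂ) ^ 2 * ((x : ℂ) + Complex.I * (y : ℂ) + Complex.I * (v : ℂ)) ^ 3)

section Aux
open Filter Set

lemma aux_tendsto (b : ℝ) (hb : 0 < b) (n : ℕ) :
    Tendsto (fun x : ℝ => x ^ n * Real.exp (-(b * x))) atTop (nhds 0) := by
  have h := (tendsto_pow_mul_exp_neg_atTop_nhds_zero n).comp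
    (Filter.Tendsto.const_mul_atTop hb tendsto_id)
  have h2 := h.const_mul ((1 : ℝ) / b ^ n)
  rw [mul_zero] at h2
  refine h2.congr (fun x => ?_)
  simp only [Function.comp, id]
  rw [mul_pow]
  field_simp

lemma aux_int (b : ℝ) (hb : 0 < b) (n : ℕ) :
    IntegrableOn (fun x : ℝ => x ^ n * Real.exp (-(b * x))) (Set.Ioi 0) := by
  apply integrable_of_isBigO_exp_neg (half_pos hb) (by fun_prop)
  rw [Asymptotics.isBigO_iff]
  refine ⟨1, ?_⟩
  have h1 := (aux_tendsto (b/2) (half_pos hb) n).eventually_le_const one_pos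
  filter_upwards [h1, eventually_ge_atTop (0:ℝ)] with x hx hx0
  have : x ^ n * Real.exp (-(b * x)) = (x ^ n * Real.exp (-(b/2 * x))) * Real.exp (-(b/2*x)) := by
    rw [mul_assoc, ← Real.exp_add]; ring_nf
  rw [Real.norm_eq_abs, Real.norm_eq_abs, this, abs_mul]
  have h2 : |x ^ n * Real.exp (-(b/2 * x))| ≤ 1 := by
    rw [_root_.abs_of_nonneg (by positivity)]; exact hx
  calc |x ^ n * Real.exp (-(b / 2 * x))| * |Real.exp (-(b/2*x))|
      ≤ 1 * |Real.exp (-(b/2*x))| := by gcongr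
    _ = 1 * |Real.exp (-(b/2)*x)| := by ring_nf

lemma integrable_sq_cexp {c : ℂ} (hc : c.re < 0) :
    IntegrableOn (fun ξ : ℝ => (ξ : ℂ) ^ 2 * Complex.exp (c * ξ)) (Set.Ioi 0) := by
  refine Integrable.mono' (aux_int (-c.re) (by linarith) 2)
    (Continuous.aestronglyMeasurable (by fun_prop)) (ae_of_all _ (fun x => ?_))
  rw [norm_mul, norm_pow, Complex.norm_real, Real.norm_eq_abs, _root_.sq_abs]
  have h1 : ‖Complex.exp (c * (x:ℂ))‖ = Real.exp (c.re * x) := by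
    rw [Complex.norm_exp]
    congr 1
    simp [Complex.mul_re]
  rw [h1, show -(-c.re * x) = c.re * x by ring]

lemma integral_sq_cexp {c : ℂ} (hc : c.re < 0) :
    ∫ ξ in Set.Ioi (0:ℝ), (ξ : ℂ) ^ 2 * Complex.exp (c * ξ) = -2 / c ^ 3 := by
  have hc0 : c ≠ 0 := fun h => by simp [h] at hc
  set F : ℝ → ℂ := fun ξ =>
    Complex.exp (c * ξ) * ((c*ξ)^2 - 2*(c*ξ) + 2) / c^3 with hF
  have hderiv : ∀ x ∈ Set.Ioi (0:ℝ), HasDerivAt F ((x:ℂ)^2 * Complex.exp (c * x)) x := by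
    intro x _
    have h0 : HasDerivAt (fun ξ : ℝ => (ξ : ℂ)) 1 x := by
      simpa using (hasDerivAt_id x).ofReal_comp
    have hl : HasDerivAt (fun ξ : ℝ => c * (ξ:ℂ)) c x := by
      simpa using h0.const_mul c
    have hexp : HasDerivAt (fun ξ : ℝ => Complex.exp (c * ξ)) (Complex.exp (c * x) * c) x := by
      simpa using hl.cexp
    have hsq : HasDerivAt (fun ξ : ℝ => (c * (ξ:ℂ))^2) (2 * c^2 * x) x := by
      have := hl.mul hl
      rw [show c * (c * (x:ℂ)) + c * (x:ℂ) * c = 2 * c^2 * x by ring] at this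
      refine this.congr_deriv rfl |>.congr_of_eventuallyEq ?_ |>.congr_deriv rfl
      filter_upwards with ξ using by rw [Pi.mul_apply]; ring
    have hpoly : HasDerivAt (fun ξ : ℝ => ((c*(ξ:ℂ))^2 - 2*(c*ξ) + 2))
        (2 * c^2 * x - 2*c) x := by
      simpa using (hsq.sub (hl.const_mul 2)).add_const (2:ℂ)
    have := (hexp.mul hpoly).div_const (c^3)
    refine this.congr_deriv ?_
    rw [div_eq_iff (pow_ne_zero 3 hc0)]
    ring
  have htend : Tendsto F atTop (nhds 0) := by
    rw [tendsto_zero_iff_norm_tendsto_zero]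
    set b : ℝ := -c.re with hb
    have hbpos : 0 < b := by rw [hb]; linarith
    have hsum : Tendsto (fun x : ℝ =>
        (‖c‖^2/‖c‖^3) * (x^2 * Real.exp (-(b*x))) +
        ((2*‖c‖/‖c‖^3) * (x^1 * Real.exp (-(b*x))) +
        ((2/‖c‖^3) * (x^0 * Real.exp (-(b*x)))))) atTop (nhds 0) := by
      have := ((aux_tendsto b hbpos 2).const_mul (‖c‖^2/‖c‖^3)).add
        (((aux_tendsto b hbpos 1).const_mul (2*‖c‖/‖c‖^3)).add
          ((aux_tendsto b hbpos 0).const_mul (2/‖c‖^3)))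
      simpa using this
    refine squeeze_zero_norm' ?_ hsum
    filter_upwards [eventually_ge_atTop (0:ℝ)] with x hx
    have he : ‖Complex.exp (c * (x:ℂ))‖ = Real.exp (-(b*x)) := by
      rw [Complex.norm_exp]
      have h2 : (c * (x:ℂ)).re = c.re * x := by simp [Complex.mul_re]
      rw [h2, hb]
      ring_nf
    have hP : ‖(c*(x:ℂ))^2 - 2*(c*(x:ℂ)) + 2‖ ≤ ‖c‖^2 * x^2 + 2*‖c‖*x + 2 := by
      refine (norm_add_le _ _).trans ?_
      have hx2 : ‖((2:ℂ))‖ = (2:ℝ) := by simp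
      rw [hx2]
      gcongr
      refine (norm_sub_le _ _).trans ?_
      have e1 : ‖(c*(x:ℂ))^2‖ = ‖c‖^2 * x^2 := by
        rw [norm_pow, norm_mul, Complex.norm_real, Real.norm_eq_abs,
          _root_.abs_of_nonneg hx, mul_pow]
      have e2 : ‖2*(c*(x:ℂ))‖ = 2*‖c‖*x := by
        rw [norm_mul, norm_mul, Complex.norm_real, Real.norm_eq_abs,
          _root_.abs_of_nonneg hx]
        simp [mul_assoc]
      rw [e1, e2]
    have hFx : ‖F x‖ = Real.exp (-(b*x)) * ‖(c*(x:ℂ))^2 - 2*(c*(x:ℂ)) + 2‖ / ‖c‖^3 := by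
      rw [hF]
      simp only [norm_div, norm_mul, norm_pow, he]
    rw [norm_norm, hFx]
    calc Real.exp (-(b*x)) * ‖(c*(x:ℂ))^2 - 2*(c*(x:ℂ)) + 2‖ / ‖c‖^3
        ≤ Real.exp (-(b*x)) * (‖c‖^2 * x^2 + 2*‖c‖*x + 2) / ‖c‖^3 := by gcongr
      _ = (‖c‖^2/‖c‖^3) * (x^2 * Real.exp (-(b*x))) +
          ((2*‖c‖/‖c‖^3) * (x^1 * Real.exp (-(b*x))) +
          ((2/‖c‖^3) * (x^0 * Real.exp (-(b*x))))) := by ring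
  have hcont : ContinuousWithinAt F (Set.Ici 0) 0 := by
    apply Continuous.continuousWithinAt
    fun_prop
  have := integral_Ioi_of_hasDerivAt_of_tendsto hcont hderiv (integrable_sq_cexp hc) htend
  rw [this, hF]
  simp
  ring

lemma part1 (x y v : ℝ) (hy : 0 < y) (hv : 0 < v) :
    -Complex.I / ((π : ℂ) ^ 2 * ((x : ℂ) + Complex.I * (y : ℂ) + Complex.I * (v : ℂ)) ^ 3)
      = 4 * (π : ℂ) * ∫ ξ in Set.Ioi (0 : ℝ),
        (ξ : ℂ) ^ 2 *
          Complex.exp (2 * (π : ℂ) * Complex.I * ((x : ℂ) + Complex.I * (y : ℂ)) * ξ) *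
          Complex.exp (-2 * (π : ℂ) * (v : ℂ) * ξ) := by
  set w : ℂ := (x : ℂ) + Complex.I * (y : ℂ) + Complex.I * (v : ℂ) with hw
  set c : ℂ := 2 * (π : ℂ) * Complex.I * ((x : ℂ) + Complex.I * (y : ℂ)) - 2 * (π : ℂ) * (v : ℂ)
    with hcdef
  have hcre : c.re = -2*π*y - 2*π*v := by
    rw [hcdef]
    simp [Complex.mul_re, Complex.sub_re, Complex.add_re, Complex.mul_im]
  have hc : c.re < 0 := by
    rw [hcre]
    have := Real.pi_pos
    nlinarith
  have hstep : ∀ ξ : ℝ, (ξ : ℂ) ^ 2 *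
      Complex.exp (2 * (π : ℂ) * Complex.I * ((x : ℂ) + Complex.I * (y : ℂ)) * ξ) *
      Complex.exp (-2 * (π : ℂ) * (v : ℂ) * ξ) = (ξ : ℂ) ^ 2 * Complex.exp (c * ξ) := by
    intro ξ
    rw [mul_assoc, ← Complex.exp_add]
    congr 2
    rw [hcdef]
    ring
  simp only [hstep]
  rw [integral_sq_cexp hc]
  have hπ : (π : ℂ) ≠ 0 := Complex.ofReal_ne_zero.mpr Real.pi_ne_zero
  have hwne : w ≠ 0 := by
    intro h
    have : w.im = 0 := by rw [h]; simp
    rw [hw] at this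
    simp [Complex.add_im, Complex.mul_im] at this
    linarith
  have hc' : c = 2 * (π:ℂ) * Complex.I * w := by
    rw [hcdef, hw]
    linear_combination (-2 * (π:ℂ) * (v:ℂ)) * Complex.I_sq
  rw [hc', show (4:ℂ) * π * (-2 / (2 * (π:ℂ) * Complex.I * w)^3)
      = (-8*π) / (2 * (π:ℂ) * Complex.I * w)^3 by ring]
  rw [div_eq_div_iff (mul_ne_zero (pow_ne_zero 2 hπ) (pow_ne_zero 3 hwne)) (by
    exact pow_ne_zero 3 (by
      refine mul_ne_zero (mul_ne_zero (by norm_num [hπ]) Complex.I_ne_zero) hwne))]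
  linear_combination ((-8)*(π:ℂ)^3*w^3*(Complex.I^2-1)) * Complex.I_sq

lemma part_diff (v : ℝ) (hv : 0 < v) :
    DifferentiableOn ℂ
      (fun z : ℂ => -Complex.I / ((π : ℂ) ^ 2 * (z + Complex.I * (v : ℝ)) ^ 3))
      {z : ℂ | 0 < z.im} := by
  intro z hz
  have him : (z + Complex.I * (v:ℝ)).im = z.im + v := by simp
  have hne : (π:ℂ)^2 * (z + Complex.I * (v:ℝ))^3 ≠ 0 := by
    refine mul_ne_zero (pow_ne_zero 2 (Complex.ofReal_ne_zero.mpr Real.pi_ne_zero))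
      (pow_ne_zero 3 (fun h => ?_))
    have : (z + Complex.I * (v:ℝ)).im = 0 := by rw [h]; simp
    rw [him] at this
    have hz' : 0 < z.im := hz
    linarith
  have hd : DifferentiableAt ℂ (fun z : ℂ => (π:ℂ)^2 * (z + Complex.I*(v:ℝ))^3) z := by
    fun_prop
  exact ((differentiableAt_const _).div hd hne).differentiableWithinAt

lemma part_int (v : ℝ) (hv : 0 < v) :
    IntegrableOn
      (fun z : ℂ => ‖-Complex.I / ((π : ℂ) ^ 2 * (z + Complex.I * (v : ℝ)) ^ 3)‖ ^ 2)
      {z : ℂ | 0 < z.im} volume := by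
  set s : Set ℂ := {z : ℂ | 0 < z.im} with hs
  have hms : MeasurableSet s := measurableSet_lt measurable_const Complex.measurable_im
  set K : ℝ := ((1+v)/v + 1)^6 with hK
  have hKpos : 0 < K := by positivity
  have hint : Integrable (fun z : ℂ => (K / π^4) * (1 + ‖z‖) ^ (-(6:ℝ))) volume := by
    refine Integrable.const_mul ?_ _
    refine integrable_one_add_norm ?_
    rw [Complex.finrank_real_complex]
    norm_num
  refine Integrable.mono' hint.restrict ?_ ?_
  · refine ContinuousOn.aestronglyMeasurable ?_ hms
    intro z hz
    have him : (z + Complex.I * (v:ℝ)).im = z.im + v := by simp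
    have hne : (π:ℂ)^2 * (z + Complex.I * (v:ℝ))^3 ≠ 0 := by
      refine mul_ne_zero (pow_ne_zero 2 (Complex.ofReal_ne_zero.mpr Real.pi_ne_zero))
        (pow_ne_zero 3 (fun h => ?_))
      have : (z + Complex.I * (v:ℝ)).im = 0 := by rw [h]; simp
      rw [him] at this
      have hz' : 0 < z.im := hz
      linarith
    have hcd : ContinuousWithinAt (fun z : ℂ => (π:ℂ)^2 * (z + Complex.I*(v:ℝ))^3) s z :=
      Continuous.continuousWithinAt (by fun_prop)
    exact ((continuousWithinAt_const.div hcd hne).norm).pow 2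
  · rw [ae_restrict_iff' hms]
    refine ae_of_all _ (fun z hz => ?_)
    have hz' : 0 < z.im := hz
    set r : ℝ := ‖z + Complex.I * (v:ℝ)‖ with hr
    have him : (z + Complex.I * (v:ℝ)).im = z.im + v := by simp
    have hvr : v ≤ r := by
      calc v ≤ z.im + v := by linarith
        _ = (z + Complex.I * (v:ℝ)).im := him.symm
        _ ≤ |(z + Complex.I * (v:ℝ)).im| := le_abs_self _
        _ ≤ r := Complex.abs_im_le_norm _
    have hrpos : 0 < r := lt_of_lt_of_le hv hvr
    have hnorm : ‖-Complex.I / ((π : ℂ) ^ 2 * (z + Complex.I * (v:ℝ)) ^ 3)‖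
        = 1 / (π^2 * r^3) := by
      rw [norm_div, norm_neg, Complex.norm_I, norm_mul, norm_pow, norm_pow,
        Complex.norm_real, Real.norm_eq_abs, _root_.abs_of_nonneg Real.pi_pos.le]
    have hzr : ‖z‖ ≤ r + v := by
      have : z = (z + Complex.I * (v:ℝ)) - Complex.I * (v:ℝ) := by ring
      rw [this]
      refine (norm_sub_le _ _).trans ?_
      have : ‖Complex.I * (v:ℝ)‖ = v := by
        rw [norm_mul, Complex.norm_I, Complex.norm_real, Real.norm_eq_abs,
          _root_.abs_of_nonneg hv.le, one_mul]
      rw [this]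
    have h1 : 1 + ‖z‖ ≤ ((1+v)/v + 1) * r := by
      have hA : 1 + v ≤ (1+v)/v * r := by
        rw [div_mul_eq_mul_div, le_div_iff₀ hv]
        nlinarith
      nlinarith [hzr]
    have h6 : (1 + ‖z‖)^6 ≤ K * r^6 := by
      rw [hK]
      calc (1 + ‖z‖)^6 ≤ (((1+v)/v + 1) * r)^6 := by
            refine pow_le_pow_left₀ (by positivity) h1 6
        _ = ((1+v)/v + 1)^6 * r^6 := by rw [mul_pow]
    have hrpow : (1 + ‖z‖) ^ (-(6:ℝ)) = ((1 + ‖z‖)^6)⁻¹ := by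
      rw [Real.rpow_neg (by positivity), ← Real.rpow_natCast (1 + ‖z‖) 6]
      norm_num
    rw [hnorm, Real.norm_eq_abs, _root_.abs_of_nonneg (by positivity), hrpow]
    have step : (1/(π^2 * r^3))^2 = 1/(π^4 * r^6) := by
      rw [div_pow, one_pow, mul_pow, ← pow_mul, ← pow_mul]
    rw [step]
    have hπ : (π:ℝ) ≠ 0 := Real.pi_ne_zero
    have hrne : r ≠ 0 := hrpos.ne'
    have hzne : (1+‖z‖) ≠ 0 := by positivity
    have hdiff : K/π^4 * ((1+‖z‖)^6)⁻¹ - 1/(π^4*r^6)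
        = (K*r^6 - (1+‖z‖)^6) / ((π^4*r^6)*(1+‖z‖)^6) := by
      field_simp
    have hnn : 0 ≤ K/π^4 * ((1+‖z‖)^6)⁻¹ - 1/(π^4*r^6) := by
      rw [hdiff]
      exact div_nonneg (by linarith) (by positivity)
    linarith

lemma part_conj (y : ℝ) (u v : ℝ) :
    (starRingEnd ℂ) (-Complex.I / ((π : ℂ) ^ 2 *
        (((-u : ℝ) : ℂ) + Complex.I * (y : ℂ) + Complex.I * (v : ℂ)) ^ 3))
      = -Complex.I / ((π : ℂ) ^ 2 *
        ((u : ℂ) + Complex.I * (v : ℂ) + Complex.I * (y : ℂ)) ^ 3) := by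
  simp only [map_div₀, map_neg, map_mul, map_pow, map_add, Complex.conj_I,
    Complex.conj_ofReal, neg_neg]
  rw [show (((-u:ℝ)):ℂ) + -Complex.I * (y:ℂ) + -Complex.I * (v:ℂ)
      = -(((u:ℝ):ℂ) + Complex.I * (v:ℂ) + Complex.I * (y:ℂ)) by push_cast; ring]
  rw [Odd.neg_pow ⟨1, by norm_num⟩, mul_neg, div_neg, neg_div]

lemma integral_lin_exp (r : ℝ) (hr : 0 < r) :
    ∫ ξ in Set.Ioi (0:ℝ), ξ * Real.exp (-(r * ξ)) = (1/r)^2 := by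
  have h := integral_rpow_mul_exp_neg_mul_Ioi (a := 2) two_pos hr
  rw [Real.Gamma_two, mul_one] at h
  rw [show (2:ℝ) - 1 = 1 by norm_num] at h
  rw [show ((1:ℝ)/r) ^ (2:ℝ) = ((1/r))^(2:ℕ) by
    rw [← Real.rpow_natCast (1/r) 2]; norm_num] at h
  rw [← h]
  refine setIntegral_congr_fun measurableSet_Ioi (fun x hx => ?_)
  rw [Real.rpow_one]

lemma no_bounded_b :
    ¬ ∃ b : ℝ → ℂ, (∃ C : ℝ, ∀ ξ : ℝ, 0 < ξ → ‖b ξ‖ ≤ C) ∧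
      ∀ x y v : ℝ, 0 < y → 0 < v →
        psiA0 x y v = 4 * (π : ℂ) * ∫ ξ in Set.Ioi (0 : ℝ),
          (ξ : ℂ) * b ξ *
            Complex.exp (2 * (π : ℂ) * Complex.I * ((x : ℂ) + Complex.I * (y : ℂ)) * ξ) *
            Complex.exp (-2 * (π : ℂ) * (v : ℂ) * ξ) := by
  rintro ⟨b, ⟨C, hC⟩, heq⟩
  have hC0 : 0 ≤ C := le_trans (norm_nonneg _) (hC 1 one_pos)
  have hπ := Real.pi_pos
  set t : ℝ := 1 / (π * (C + 1)) with ht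
  have htpos : 0 < t := by positivity
  have key := heq 0 (t/2) (t/2) (half_pos htpos) (half_pos htpos)
  -- norm of LHS
  have hlhs : ‖psiA0 0 (t/2) (t/2)‖ = 1 / (π^2 * t^3) := by
    rw [psiA0]
    rw [show ((0:ℝ):ℂ) + Complex.I * ((t/2 : ℝ):ℂ) + Complex.I * ((t/2 : ℝ):ℂ)
        = Complex.I * (t:ℂ) by push_cast; ring]
    rw [norm_div, norm_neg, Complex.norm_I]
    congr 1
    simp [norm_mul, norm_pow, Complex.norm_I, Complex.norm_real, Real.norm_eq_abs,
      _root_.abs_of_nonneg hπ.le, _root_.abs_of_nonneg htpos.le]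
  -- bound the integral
  set E : ℝ → ℂ := fun ξ => (ξ : ℂ) * b ξ *
      Complex.exp (2 * (π : ℂ) * Complex.I * (((0:ℝ) : ℂ) + Complex.I * ((t/2 : ℝ) : ℂ)) * ξ) *
      Complex.exp (-2 * (π : ℂ) * ((t/2 : ℝ) : ℂ) * ξ) with hE
  have hbound : ∀ ξ : ℝ, ξ ∈ Set.Ioi (0:ℝ) → ‖E ξ‖ ≤ C * (ξ * Real.exp (-(2*π*t * ξ))) := by
    intro ξ hξ
    have hξ' : (0:ℝ) < ξ := hξ
    rw [hE]
    simp only [norm_mul]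
    have e1 : ‖((ξ:ℝ):ℂ)‖ = ξ := by
      rw [Complex.norm_real, Real.norm_eq_abs, _root_.abs_of_nonneg hξ'.le]
    have e2 : ‖Complex.exp (2 * (π : ℂ) * Complex.I * (((0:ℝ):ℂ) + Complex.I * ((t/2:ℝ):ℂ)) * ξ)‖
        = Real.exp (-(π * t * ξ)) := by
      rw [Complex.norm_exp]
      congr 1
      rw [show 2 * (π : ℂ) * Complex.I * (((0:ℝ):ℂ) + Complex.I * ((t/2:ℝ):ℂ)) * ξ
          = ((-(π * t * ξ) : ℝ) : ℂ) by push_cast; linear_combination (π*t*ξ:ℂ) * Complex.I_sq]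
      rw [Complex.ofReal_re]
    have e3 : ‖Complex.exp (-2 * (π : ℂ) * ((t/2:ℝ):ℂ) * ξ)‖ = Real.exp (-(π * t * ξ)) := by
      rw [Complex.norm_exp]
      congr 1
      rw [show -2 * (π : ℂ) * ((t/2:ℝ):ℂ) * ξ = ((-(π * t * ξ) : ℝ) : ℂ) by push_cast; ring]
      rw [Complex.ofReal_re]
    rw [e1, e2, e3]
    have e4 : Real.exp (-(π * t * ξ)) * Real.exp (-(π * t * ξ)) = Real.exp (-(2*π*t*ξ)) := by
      rw [← Real.exp_add]
      congr 1
      ring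
    calc ξ * ‖b ξ‖ * Real.exp (-(π * t * ξ)) * Real.exp (-(π * t * ξ))
        ≤ ξ * C * Real.exp (-(π * t * ξ)) * Real.exp (-(π * t * ξ)) := by
          have := hC ξ hξ'
          gcongr
      _ = C * (ξ * (Real.exp (-(π * t * ξ)) * Real.exp (-(π * t * ξ)))) := by ring
      _ = C * (ξ * Real.exp (-(2*π*t * ξ))) := by rw [e4]
  have hgint : IntegrableOn (fun ξ : ℝ => C * (ξ * Real.exp (-(2*π*t * ξ)))) (Set.Ioi 0) := by
    have := (aux_int (2*π*t) (by positivity) 1).const_mul C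
    simpa [pow_one, IntegrableOn] using this
  have hile : ‖∫ ξ in Set.Ioi (0:ℝ), E ξ‖ ≤ C * (1/(2*π*t))^2 := by
    refine (norm_integral_le_integral_norm _).trans ?_
    have h1 : ∫ ξ in Set.Ioi (0:ℝ), ‖E ξ‖
        ≤ ∫ ξ in Set.Ioi (0:ℝ), C * (ξ * Real.exp (-(2*π*t * ξ))) := by
      refine integral_mono_of_nonneg (ae_of_all _ (fun ξ => norm_nonneg _)) hgint ?_
      rw [EventuallyLE, ae_restrict_iff' measurableSet_Ioi]
      exact ae_of_all _ hbound
    refine h1.trans ?_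
    rw [integral_const_mul, integral_lin_exp (2*π*t) (by positivity)]
  have hfinal : 1 / (π^2 * t^3) ≤ 4 * π * (C * (1/(2*π*t))^2) := by
    have hnorm4 : ‖(4 * (π:ℂ))‖ = 4 * π := by
      rw [norm_mul, Complex.norm_real, Real.norm_eq_abs, _root_.abs_of_nonneg hπ.le]
      norm_num
    calc 1 / (π^2 * t^3) = ‖psiA0 0 (t/2) (t/2)‖ := hlhs.symm
      _ = ‖(4 * (π:ℂ))‖ * ‖∫ ξ in Set.Ioi (0:ℝ), E ξ‖ := by rw [key, norm_mul]
      _ ≤ (4 * π) * (C * (1/(2*π*t))^2) := by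
          rw [hnorm4]
          have h4 : (0:ℝ) ≤ 4 * π := by positivity
          exact mul_le_mul_of_nonneg_left hile h4
  -- derive contradiction
  have hsimp : 4 * π * (C * (1/(2*π*t))^2) = C / (π * t^2) := by
    field_simp
    ring
  rw [hsimp] at hfinal
  rw [div_le_div_iff₀ (by positivity) (by positivity)] at hfinal
  -- hfinal : 1 * (π * t^2) ≤ C * (π^2 * t^3)
  have h2 : 1 ≤ C * π * t := by
    have hpt : 0 < π * t^2 := by positivity
    nlinarith
  have h3 : C * π * t = C / (C + 1) := by
    rw [ht]
    field_simp
  rw [h3] at h2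
  have h4 : C / (C + 1) < 1 := by
    rw [div_lt_one (by linarith)]
    linarith
  linarith

end Aux

/-- in the vertical-operator setting on the Bergman space of the upper
half-plane, the function `ψ(x,y,v) = 4π∫₀^∞ ξ² e^{2πi(x+iy)ξ} e^{−2πvξ} dξ
= −i/(π²(x+iy+iv)³)` satisfies both membership conditions of `A₀` — for fixed `v > 0`
it is a square-integrable holomorphic function of `z = x+iy` on the upper half-plane,
and the conjugate `conj ψ(−u,y,v) = ψ(u,v,y)` is likewise a square-integrable
holomorphic function of `w = u+iv` — but there is no bounded `b` on `(0,∞)` with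
`ψ = φ_b`; hence `ψ ∈ A₀ \ A`, so `A₀` strictly contains `A`. -/
theorem A0_strictly_contains_A :
    (∀ x y v : ℝ, 0 < y → 0 < v →
      psiA0 x y v = 4 * (π : ℂ) * ∫ ξ in Set.Ioi (0 : ℝ),
        (ξ : ℂ) ^ 2 *
          Complex.exp (2 * (π : ℂ) * Complex.I * ((x : ℂ) + Complex.I * (y : ℂ)) * ξ) *
          Complex.exp (-2 * (π : ℂ) * (v : ℂ) * ξ)) ∧
    (∀ v : ℝ, 0 < v →
      DifferentiableOn ℂ
        (fun z : ℂ => -Complex.I / ((π : ℂ) ^ 2 * (z + Complex.I * (v : ℂ)) ^ 3))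
        {z : ℂ | 0 < z.im} ∧
      IntegrableOn
        (fun z : ℂ => ‖-Complex.I / ((π : ℂ) ^ 2 * (z + Complex.I * (v : ℂ)) ^ 3)‖ ^ 2)
        {z : ℂ | 0 < z.im} volume) ∧
    (∀ y : ℝ, 0 < y →
      (∀ u v : ℝ, (starRingEnd ℂ) (psiA0 (-u) y v) = psiA0 u v y) ∧
      DifferentiableOn ℂ
        (fun w : ℂ => -Complex.I / ((π : ℂ) ^ 2 * (w + Complex.I * (y : ℂ)) ^ 3))
        {w : ℂ | 0 < w.im} ∧
      IntegrableOn
        (fun w : ℂ => ‖-Complex.I / ((π : ℂ) ^ 2 * (w + Complex.I * (y : ℂ)) ^ 3)‖ ^ 2)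
        {w : ℂ | 0 < w.im} volume) ∧
    ¬ ∃ b : ℝ → ℂ, (∃ C : ℝ, ∀ ξ : ℝ, 0 < ξ → ‖b ξ‖ ≤ C) ∧
      ∀ x y v : ℝ, 0 < y → 0 < v →
        psiA0 x y v = 4 * (π : ℂ) * ∫ ξ in Set.Ioi (0 : ℝ),
          (ξ : ℂ) * b ξ *
            Complex.exp (2 * (π : ℂ) * Complex.I * ((x : ℂ) + Complex.I * (y : ℂ)) * ξ) *
            Complex.exp (-2 * (π : ℂ) * (v : ℂ) * ξ) := by
  refine ⟨fun x y v hy hv => ?_,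
    fun v hv => ⟨part_diff v hv, part_int v hv⟩,
    fun y hy => ⟨fun u v => ?_, part_diff y hy, part_int y hy⟩,
    no_bounded_b⟩
  · rw [psiA0]
    exact part1 x y v hy hv
  · rw [psiA0, psiA0]
    exact part_conj y u v
end
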